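/- Functional characterization of IS models (discrete version): let η : 𝒳 → 𝒰 between finite sets and let μ be a joint distribution of (X,Y) with Y in finite 𝒴. Then X and Y are conditionally independent given η(X) if and only if there exists a measurable function f : [0,1] × 𝒰 → 𝒴 such that for every x with μ_X(x) > 0, the conditional distribution of Y given X = x equals the law of f(W, η(x)) where W is uniform on [0,1]. -/

import Mathlib

open Finset

noncomputable section

/-- Marginal distribution of the first coordinate of a joint distribution. -/
def margX {X Y : Type*} [Fintype Y] (μ : X → Y → ℝ) (x : X) : ℝ := ∑ y, μ x y

/-- Marginal distribution of the second coordinate. -/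
def margY {X Y : Type*} [Fintype X] (μ : X → Y → ℝ) (y : Y) : ℝ := ∑ x, μ x y

/-- Distribution of `U = η X`. -/
def margU {X Y U : Type*} [Fintype X] [Fintype Y] [DecidableEq U]
    (μ : X → Y → ℝ) (η : X → U) (u : U) : ℝ :=
  ∑ x, if η x = u then margX μ x else 0

/-- Joint probability `P(Y = y, η X = u)`. -/
def margYU {X Y U : Type*} [Fintype X] [DecidableEq U]
    (μ : X → Y → ℝ) (η : X → U) (y : Y) (u : U) : ℝ :=
  ∑ x, if η x = u then μ x y else 0

/-- Joint distribution of the pair `(η X, Y)`. -/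
def jointUY {X Y U : Type*} [Fintype X] [DecidableEq U]
    (μ : X → Y → ℝ) (η : X → U) : U → Y → ℝ :=
  fun u y => margYU μ η y u

/-- Shannon mutual information `I(X;Y)` of a joint distribution (natural log). -/
def MI {X Y : Type*} [Fintype X] [Fintype Y] (μ : X → Y → ℝ) : ℝ :=
  ∑ x, ∑ y, μ x y * Real.log (μ x y / (margX μ x * margY μ y))

/-- Conditional Shannon entropy `H(Y|X)`. -/
def condEnt {X Y : Type*} [Fintype X] [Fintype Y] (μ : X → Y → ℝ) : ℝ :=
  -∑ x, ∑ y, μ x y * Real.log (μ x y / margX μ x)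

/-- Conditional mutual information `I(X;Y|U)` where `U = η X` is a deterministic
function of `X`. -/
def condMI {X Y U : Type*} [Fintype X] [Fintype Y] [DecidableEq U]
    (μ : X → Y → ℝ) (η : X → U) : ℝ :=
  ∑ x, ∑ y, μ x y *
    Real.log (μ x y * margU μ η (η x) / (margX μ x * margYU μ η y (η x)))

/-- `μ` is a probability distribution on `X × Y`. -/
def IsDist {X Y : Type*} [Fintype X] [Fintype Y] (μ : X → Y → ℝ) : Prop :=
  (∀ x y, 0 ≤ μ x y) ∧ ∑ x, ∑ y, μ x y = 1

/-- `X` and `Y` are conditionally independent given `U = η X`: for every `u` with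
`P(U = u) > 0`, `P(X = x, Y = y | U = u) = P(X = x | U = u) · P(Y = y | U = u)`
(stated multiplied through by `P(U = u)²`). -/
def CondIndep {X Y U : Type*} [Fintype X] [Fintype Y] [DecidableEq U]
    (μ : X → Y → ℝ) (η : X → U) : Prop :=
  ∀ u, 0 < margU μ η u → ∀ x y,
    (if η x = u then μ x y else 0) * margU μ η u =
      (if η x = u then margX μ x else 0) * margYU μ η y u

/-- Cross-entropy risk `E_{(X,Y)∼μ}[− log v(Y|X)]` of a predictive conditional
distribution `v`. -/
def risk {X Y : Type*} [Fintype X] [Fintype Y] (μ : X → Y → ℝ) (v : X → Y → ℝ) : ℝ :=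
  ∑ x, ∑ y, μ x y * (-Real.log (v x y))

/-- Kullback–Leibler divergence between two joint distributions on `X × Y`. -/
def KL {X Y : Type*} [Fintype X] [Fintype Y] (μ ν : X → Y → ℝ) : ℝ :=
  ∑ x, ∑ y, μ x y * Real.log (μ x y / ν x y)

/-- Averaged conditional KL divergence `D(μ_{Y|X} ‖ v | μ_X)`. -/
def avgKL {X Y : Type*} [Fintype X] [Fintype Y] (μ : X → Y → ℝ) (v : X → Y → ℝ) : ℝ :=
  ∑ x, margX μ x * ∑ y,
    (μ x y / margX μ x) * Real.log ((μ x y / margX μ x) / v x y)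

/-- Averaged conditional KL divergence in the latent domain:
`D(μ_{Y|U} ‖ v | μ_U)` for the encoder `η`. -/
def decKL {X Y U : Type*} [Fintype X] [Fintype Y] [Fintype U] [DecidableEq U]
    (μ : X → Y → ℝ) (η : X → U) (v : U → Y → ℝ) : ℝ :=
  ∑ u, margU μ η u * ∑ y,
    (margYU μ η y u / margU μ η u) *
      Real.log ((margYU μ η y u / margU μ η u) / v u y)


lemma law_of_dist {Y : Type*} [Fintype Y] [DecidableEq Y] (p : Y → ℝ)
    (hp0 : ∀ y, 0 ≤ p y) (hp1 : ∑ y, p y = 1) :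
    ∃ g : ℝ → Y, (∀ y, MeasurableSet {w : ℝ | g w = y}) ∧
      ∀ y, ((MeasureTheory.volume.restrict (Set.Icc (0:ℝ) 1)) {w : ℝ | g w = y}).toReal = p y := by
  have hY : Nonempty Y := by
    by_contra h
    rw [not_nonempty_iff] at h
    simp [Finset.univ_eq_empty] at hp1
  set e := Fintype.equivFin Y with he
  set n := Fintype.card Y with hn
  set c : ℕ → ℝ := fun k => ∑ y ∈ Finset.univ.filter (fun y => (e y : ℕ) < k), p y with hc
  have hc0 : c 0 = 0 := by simp [hc]
  have hcmono : Monotone c := by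
    intro a b hab
    apply Finset.sum_le_sum_of_subset_of_nonneg
    · intro y hy
      simp only [Finset.mem_filter, Finset.mem_univ, true_and] at hy ⊢
      omega
    · intro y _ _; exact hp0 y
  have hcn : c n = 1 := by
    rw [← hp1, hc]
    apply Finset.sum_congr _ (fun _ _ => rfl)
    ext y; simp [Fin.is_lt]
  have hstep : ∀ y : Y, c ((e y : ℕ) + 1) = p y + c (e y : ℕ) := by
    intro y
    have hins : Finset.univ.filter (fun z => (e z : ℕ) < (e y : ℕ) + 1)
        = insert y (Finset.univ.filter (fun z => (e z : ℕ) < (e y : ℕ))) := by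
      ext z
      simp only [Finset.mem_filter, Finset.mem_univ, true_and, Finset.mem_insert]
      constructor
      · intro hz
        rcases Nat.lt_succ_iff_lt_or_eq.mp hz with h | h
        · exact Or.inr h
        · exact Or.inl (e.injective (Fin.val_injective h))
      · rintro (rfl | h)
        · omega
        · omega
    rw [hc]
    simp only [hins]
    rw [Finset.sum_insert (by simp)]
  -- property
  set P : ℝ → Y → Prop := fun w y => c (e y : ℕ) ≤ w ∧ w < c ((e y : ℕ) + 1) with hP
  have hbound : ∀ y : Y, 0 ≤ c (e y : ℕ) ∧ c ((e y : ℕ) + 1) ≤ 1 := by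
    intro y
    constructor
    · rw [← hc0]; exact hcmono (Nat.zero_le _)
    · rw [← hcn]; exact hcmono (e y).is_lt
  have huniq : ∀ w (y₁ y₂ : Y), P w y₁ → P w y₂ → y₁ = y₂ := by
    intro w y₁ y₂ h1 h2
    rcases lt_trichotomy ((e y₁ : ℕ)) ((e y₂ : ℕ)) with h | h | h
    · have := hcmono (show (e y₁ : ℕ) + 1 ≤ (e y₂ : ℕ) from h)
      exact absurd (lt_of_lt_of_le h1.2 (le_trans this h2.1)) (lt_irrefl w).elim -- fix
    · exact e.injective (Fin.val_injective h)
    · have := hcmono (show (e y₂ : ℕ) + 1 ≤ (e y₁ : ℕ) from h)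
      linarith [h2.2, h1.1]
  have hexist : ∀ w : ℝ, 0 ≤ w → w < 1 → ∃ y, P w y := by
    intro w hw0 hw1
    have hnpos : 0 < n := Fintype.card_pos
    set T := Finset.univ.filter (fun y : Y => w < c ((e y : ℕ) + 1)) with hT
    have hTne : T.Nonempty := by
      refine ⟨e.symm ⟨n - 1, by omega⟩, ?_⟩
      simp only [hT, Finset.mem_filter, Finset.mem_univ, true_and, Equiv.apply_symm_apply]
      have : (n - 1) + 1 = n := by omega
      rw [this, hcn]; exact hw1
    obtain ⟨y, hyT, hymin⟩ := Finset.exists_min_image T (fun y => (e y : ℕ)) hTne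
    simp only [hT, Finset.mem_filter, Finset.mem_univ, true_and] at hyT
    refine ⟨y, ?_, hyT⟩
    by_contra hlt
    push_neg at hlt
    have hey : (e y : ℕ) ≠ 0 := by
      intro h0; rw [h0, hc0] at hlt; linarith
    set k := (e y : ℕ) - 1 with hk
    have hkn : k < n := by have := (e y).is_lt; omega
    set y' := e.symm ⟨k, hkn⟩ with hy'
    have hey' : (e y' : ℕ) = k := by simp [hy']
    have hy'T : y' ∈ T := by
      simp only [hT, Finset.mem_filter, Finset.mem_univ, true_and, hey']
      have : k + 1 = (e y : ℕ) := by omega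
      rw [this]; exact hlt
    have := hymin y' hy'T
    rw [hey'] at this
    omega
  set y₀ : Y := Classical.arbitrary Y with hy₀
  set g : ℝ → Y := fun w => if h : ∃ y, P w y then h.choose else y₀ with hg
  have hset : ∀ y : Y, {w : ℝ | g w = y}
      = Set.Ico (c (e y : ℕ)) (c ((e y : ℕ) + 1))
        ∪ (if y = y₀ then (Set.Ico (0:ℝ) 1)ᶜ else ∅) := by
    intro y
    ext w
    simp only [Set.mem_setOf_eq, Set.mem_union, hg]
    constructor
    · intro hw
      by_cases h : ∃ z, P w z
      · rw [dif_pos h] at hw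
        have := h.choose_spec
        rw [hw] at this
        exact Or.inl ⟨this.1, this.2⟩
      · rw [dif_neg h] at hw
        right
        rw [← hw, if_pos rfl]
        intro hmem
        exact h (hexist w hmem.1 hmem.2)
    · rintro (hw | hw)
      · have hPy : P w y := ⟨hw.1, hw.2⟩
        have h : ∃ z, P w z := ⟨y, hPy⟩
        rw [dif_pos h]
        exact huniq w h.choose y h.choose_spec hPy
      · by_cases hyy : y = y₀
        · rw [if_pos hyy] at hw
          have h : ¬ ∃ z, P w z := by
            rintro ⟨z, hz⟩
            exact hw ⟨le_trans (hbound z).1 hz.1, lt_of_lt_of_le hz.2 (hbound z).2⟩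
          rw [dif_neg h, hyy]
        · rw [if_neg hyy] at hw; exact absurd hw (Set.notMem_empty w)
  refine ⟨g, ?_, ?_⟩
  · intro y
    rw [hset y]
    apply MeasurableSet.union measurableSet_Ico
    split
    · exact measurableSet_Ico.compl
    · exact MeasurableSet.empty
  · intro y
    have hmeas : MeasurableSet {w : ℝ | g w = y} := by
      rw [hset y]
      apply MeasurableSet.union measurableSet_Ico
      split
      · exact measurableSet_Ico.compl
      · exact MeasurableSet.empty
    rw [MeasureTheory.Measure.restrict_apply hmeas]
    have hsub1 : Set.Ico (c (e y : ℕ)) (c ((e y : ℕ) + 1)) ⊆ {w : ℝ | g w = y} ∩ Set.Icc 0 1 := by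
      intro w hw
      constructor
      · rw [hset y]; exact Or.inl hw
      · exact ⟨le_trans (hbound y).1 hw.1, le_of_lt (lt_of_lt_of_le hw.2 (hbound y).2)⟩
    have hsub2 : {w : ℝ | g w = y} ∩ Set.Icc 0 1
        ⊆ Set.Ico (c (e y : ℕ)) (c ((e y : ℕ) + 1)) ∪ {(1:ℝ)} := by
      rintro w ⟨hw1, hw2⟩
      rw [hset y] at hw1
      rcases hw1 with h | h
      · exact Or.inl h
      · right
        by_cases hyy : y = y₀
        · rw [if_pos hyy] at h
          have : ¬ (0 ≤ w ∧ w < 1) := by simpa [Set.mem_Ico] using h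
          have : w = 1 := by
            rcases hw2 with ⟨hw2a, hw2b⟩
            by_contra hne
            exact this ⟨hw2a, lt_of_le_of_ne hw2b hne⟩
          simp [this]
        · rw [if_neg hyy] at h; exact absurd h (Set.notMem_empty w)
    have hvol : MeasureTheory.volume ({w : ℝ | g w = y} ∩ Set.Icc 0 1)
        = ENNReal.ofReal (p y) := by
      apply le_antisymm
      · calc MeasureTheory.volume ({w : ℝ | g w = y} ∩ Set.Icc 0 1)
            ≤ MeasureTheory.volume (Set.Ico (c (e y : ℕ)) (c ((e y : ℕ) + 1)) ∪ {(1:ℝ)}) :=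
              MeasureTheory.measure_mono hsub2
          _ ≤ MeasureTheory.volume (Set.Ico (c (e y : ℕ)) (c ((e y : ℕ) + 1)))
              + MeasureTheory.volume ({(1:ℝ)}) := MeasureTheory.measure_union_le _ _
          _ = ENNReal.ofReal (p y) := by
              rw [Real.volume_Ico, Real.volume_singleton, add_zero, hstep y]
              ring_nf
      · calc ENNReal.ofReal (p y)
            = MeasureTheory.volume (Set.Ico (c (e y : ℕ)) (c ((e y : ℕ) + 1))) := by
              rw [Real.volume_Ico]; congr 1; linarith [hstep y]
          _ ≤ MeasureTheory.volume ({w : ℝ | g w = y} ∩ Set.Icc 0 1) :=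
              MeasureTheory.measure_mono hsub1
    rw [hvol, ENNReal.toReal_ofReal (hp0 y)]

/-- functional characterization of IS models. `X ⟂ Y | η(X)` iff
there is a measurable `f : [0,1] × 𝒰 → 𝒴` such that for every `x` of positive
probability, the conditional law of `Y` given `X = x` is the law of `f(W, η(x))`
with `W ∼ Unif[0,1]`. -/
theorem stmt14 {X Y U : Type*} [Fintype X] [Fintype Y] [Fintype U]
    [DecidableEq U] [DecidableEq Y]
    (μ : X → Y → ℝ) (η : X → U) (hμ : IsDist μ) :
    CondIndep μ η ↔
      ∃ f : ℝ → U → Y,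
        (∀ u y, MeasurableSet {w : ℝ | f w u = y}) ∧
          ∀ x, 0 < margX μ x → ∀ y,
            μ x y / margX μ x =
              ((MeasureTheory.volume.restrict (Set.Icc (0 : ℝ) 1))
                {w : ℝ | f w (η x) = y}).toReal := by
  obtain ⟨hnn, hsum⟩ := hμ
  constructor
  · intro h
    have hY : Nonempty Y := by
      by_contra hne
      rw [not_nonempty_iff] at hne
      simp [Finset.univ_eq_empty] at hsum
    have hXnn : ∀ x, 0 ≤ margX μ x := fun x => Finset.sum_nonneg fun y _ => hnn x y
    have hYUnn : ∀ (y : Y) (u : U), 0 ≤ margYU μ η y u := fun y u =>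
      Finset.sum_nonneg fun x _ => by
        split
        · exact hnn x y
        · exact le_rfl
    have hsumYU : ∀ u, ∑ y, margYU μ η y u = margU μ η u := by
      intro u
      unfold margYU margU
      rw [Finset.sum_comm]
      refine Finset.sum_congr rfl fun x _ => ?_
      split <;> simp [margX]
    set q : U → Y → ℝ := fun u y => if 0 < margU μ η u then margYU μ η y u / margU μ η u
      else (if y = Classical.arbitrary Y then 1 else 0) with hqdef
    have hq0 : ∀ u y, 0 ≤ q u y := by
      intro u y
      simp only [hqdef]
      split
      · exact div_nonneg (hYUnn y u) (by linarith)
      · split <;> norm_num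
    have hq1 : ∀ u, ∑ y, q u y = 1 := by
      intro u
      simp only [hqdef]
      by_cases hu : 0 < margU μ η u
      · simp only [if_pos hu]
        rw [← Finset.sum_div, hsumYU, div_self hu.ne']
      · simp only [if_neg hu]
        simp
    have hfex : ∀ u, ∃ g : ℝ → Y, (∀ y, MeasurableSet {w : ℝ | g w = y}) ∧
        ∀ y, ((MeasureTheory.volume.restrict (Set.Icc (0:ℝ) 1)) {w : ℝ | g w = y}).toReal
          = q u y := fun u => law_of_dist (q u) (hq0 u) (hq1 u)
    choose g hg1 hg2 using hfex
    refine ⟨fun w u => g u w, fun u y => hg1 u y, ?_⟩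
    intro x hx y
    have hupos : 0 < margU μ η (η x) := by
      have h1 := Finset.single_le_sum
        (f := fun x' => if η x' = η x then margX μ x' else 0)
        (fun i _ => by
          split
          · exact hXnn i
          · exact le_refl 0) (Finset.mem_univ x)
      simp only [if_pos] at h1
      unfold margU
      linarith
    rw [hg2 (η x) y]
    simp only [hqdef, if_pos hupos]
    have hci := h (η x) hupos x y
    simp only [if_pos] at hci
    rw [div_eq_div_iff hx.ne' hupos.ne']
    linarith
  · rintro ⟨f, hfm, hf⟩
    set g : U → Y → ℝ := fun u y =>
      ((MeasureTheory.volume.restrict (Set.Icc (0:ℝ) 1)) {w : ℝ | f w u = y}).toReal with hgdef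
    have hXnn : ∀ x, 0 ≤ margX μ x := fun x => Finset.sum_nonneg fun y _ => hnn x y
    have hμg : ∀ x y, μ x y = margX μ x * g (η x) y := by
      intro x y
      rcases eq_or_lt_of_le (hXnn x) with hx | hx
      · have h0 : μ x y = 0 := by
          have := (Finset.sum_eq_zero_iff_of_nonneg (fun y' _ => hnn x y')).mp hx.symm
          exact this y (Finset.mem_univ y)
        rw [h0, ← hx, zero_mul]
      · have h2 : g (η x) y = μ x y / margX μ x := (hf x hx y).symm
        rw [h2]
        field_simp
    intro u hu x y
    by_cases hx : η x = u
    · have hYU : margYU μ η y u = margU μ η u * g u y := by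
        unfold margYU margU
        rw [Finset.sum_mul]
        refine Finset.sum_congr rfl fun x' _ => ?_
        by_cases hx' : η x' = u
        · rw [if_pos hx', if_pos hx', hμg x' y, hx']
        · simp [hx']
      rw [if_pos hx, if_pos hx, hμg x y, hx, hYU]
      ring
    · simp [hx]
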